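/- There exists a constant δ* > 2 (depending only on the step size α > 0 and on β₂ ∈ [0,1)) such that for every δ > δ* and every initial point w₁ ∈ ℝ, the ADAM iterates (w_t) applied to the stochastic optimization problem OP(δ) fail to converge in expectation to the optimal value: it is NOT the case that E[F(w_t)] → F*, where F* = min_w F(w) = F(−δ²). -/

import Mathlib

set_option maxHeartbeats 1000000

open MeasureTheory Filter

/-- The stochastic gradient oracle of the problem OP(δ):
`G(w;1) = w/δ + δ⁴` (sampled with probability `(1+δ)/(1+δ⁴)`) and `G(w;2) = w/δ - 1`.
We encode the outcome `ξ = 1` by `true` and `ξ = 2` by `false`. -/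
noncomputable def OPgrad (δ w : ℝ) (ξ : Bool) : ℝ :=
  if ξ then w / δ + δ ^ 4 else w / δ - 1

/-- The population loss of OP(δ): `F(w) = w²/(2δ) + δ·w`, minimized at `w* = -δ²`. -/
noncomputable def OPloss (δ w : ℝ) : ℝ :=
  w ^ 2 / (2 * δ) + δ * w


section Deterministic

variable {α β₂ δ : ℝ} {W V : ℕ → ℝ} {X : ℕ → Bool}

lemma OPgrad_abs_le (hδ : 1 ≤ δ) (x : ℝ) (b : Bool) : |OPgrad δ x b| ≤ |x| / δ + δ ^ 4 := by
  have hδ0 : (0:ℝ) < δ := lt_of_lt_of_le one_pos hδ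
  have h4 : (1:ℝ) ≤ δ ^ 4 := one_le_pow₀ hδ
  have hxd : |x / δ| = |x| / δ := by rw [abs_div, abs_of_pos hδ0]
  cases b with
  | true =>
    simp only [OPgrad, if_true]
    calc |x / δ + δ ^ 4| ≤ |x / δ| + |δ ^ 4| := abs_add_le _ _
      _ ≤ |x| / δ + δ ^ 4 := by
        have h5 : |δ ^ 4| = δ ^ 4 := abs_of_pos (pow_pos hδ0 4)
        rw [hxd]; linarith
  | false =>
    simp only [OPgrad, if_false]
    calc |x / δ - 1| ≤ |x / δ| + |(1:ℝ)| := abs_sub _ _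
      _ ≤ |x| / δ + δ ^ 4 := by rw [hxd]; simp; linarith


lemma V_nonneg (hβ₂0 : 0 ≤ β₂) (hβ₂1 : β₂ < 1) (hV0 : V 0 = 0)
    (hVrec : ∀ t, 1 ≤ t → V t = β₂ * V (t-1) + (1-β₂) * (OPgrad δ (W t) (X t))^2) :
    ∀ t, 0 ≤ V t := by
  intro t
  induction t with
  | zero => simp [hV0]
  | succ n ih =>
    rw [hVrec (n+1) (by omega)]
    simp only [Nat.add_sub_cancel]
    have := sq_nonneg (OPgrad δ (W (n+1)) (X (n+1)))
    nlinarith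


lemma V_ge (hβ₂0 : 0 ≤ β₂) (hβ₂1 : β₂ < 1) (hV0 : V 0 = 0)
    (hVrec : ∀ t, 1 ≤ t → V t = β₂ * V (t-1) + (1-β₂) * (OPgrad δ (W t) (X t))^2) :
    ∀ t, 1 ≤ t → (1-β₂) * (OPgrad δ (W t) (X t))^2 ≤ V t := by
  intro t ht
  rw [hVrec t ht]
  have h := V_nonneg hβ₂0 hβ₂1 hV0 hVrec (t-1)
  nlinarith


lemma step_abs_le_main (hα : 0 < α) (hβ₂0 : 0 ≤ β₂) (hβ₂1 : β₂ < 1) (hV0 : V 0 = 0)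
    (hVrec : ∀ t, 1 ≤ t → V t = β₂ * V (t-1) + (1-β₂) * (OPgrad δ (W t) (X t))^2)
    (hWrec : ∀ t, 1 ≤ t → W (t+1) = W t - α * OPgrad δ (W t) (X t) / Real.sqrt (V t)) :
    ∀ t, 1 ≤ t → |W (t+1) - W t| ≤ α / Real.sqrt (1-β₂) := by
  intro t ht
  have hK : (0:ℝ) < 1 - β₂ := by linarith
  have h1 : W (t+1) - W t = -(α * OPgrad δ (W t) (X t) / Real.sqrt (V t)) := by
    rw [hWrec t ht]; ring
  rw [h1, abs_neg]
  set g := OPgrad δ (W t) (X t) with hgdef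
  rcases eq_or_ne g 0 with hg | hg
  · rw [hg]; simp; positivity
  · have hVt : (1-β₂) * g^2 ≤ V t := V_ge hβ₂0 hβ₂1 hV0 hVrec t ht
    have hVpos : 0 < V t := lt_of_lt_of_le (by positivity) hVt
    have hgpos : 0 < |g| := abs_pos.mpr hg
    have hs : Real.sqrt (1-β₂) * |g| ≤ Real.sqrt (V t) := by
      have : Real.sqrt ((1-β₂) * g^2) ≤ Real.sqrt (V t) := Real.sqrt_le_sqrt hVt
      rwa [Real.sqrt_mul hK.le, Real.sqrt_sq_eq_abs] at this
    have habs : |α * g / Real.sqrt (V t)| = α * |g| / Real.sqrt (V t) := by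
      rw [abs_div, abs_mul, abs_of_pos hα, abs_of_pos (Real.sqrt_pos.mpr hVpos)]
    rw [habs]
    have hsK : 0 < Real.sqrt (1-β₂) := Real.sqrt_pos.mpr hK
    calc α * |g| / Real.sqrt (V t) ≤ α * |g| / (Real.sqrt (1-β₂) * |g|) := by
          apply div_le_div_of_nonneg_left (by positivity) (by positivity) hs
      _ = α / Real.sqrt (1-β₂) := by field_simp


lemma step_abs_le' (hC : ∀ t, 1 ≤ t → |W (t+1) - W t| ≤ α / Real.sqrt (1-β₂)) :
    ∀ d s, 1 ≤ s → |W s| ≤ |W (s+d)| + (α / Real.sqrt (1-β₂)) * d := by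
  intro d
  induction d with
  | zero => intro s _; simp
  | succ n ih =>
    intro s hs
    have h1 : |W s| - |W (s+1)| ≤ |W (s+1) - W s| := by
      have := abs_sub_abs_le_abs_sub (W s) (W (s+1))
      have h2 : |W s - W (s+1)| = |W (s+1) - W s| := abs_sub_comm _ _
      linarith
    have h3 := hC s hs
    have h4 := ih (s+1) (by omega)
    have h5 : s + 1 + n = s + (n+1) := by omega
    rw [h5] at h4
    push_cast
    push_cast at h4
    linarith

lemma V_bound (hα : 0 < α) (hβ₂0 : 0 ≤ β₂) (hβ₂1 : β₂ < 1) (hδ1 : 1 ≤ δ)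
    {S : ℝ}
    (hS : ∀ j : ℕ, ((δ^2+1+(α / Real.sqrt (1-β₂))*((j:ℝ)+1))/δ + δ^4)^2 * (Real.sqrt β₂)^j ≤ S)
    (hV0 : V 0 = 0)
    (hVrec : ∀ t, 1 ≤ t → V t = β₂ * V (t-1) + (1-β₂) * (OPgrad δ (W t) (X t))^2)
    (hC : ∀ t, 1 ≤ t → |W (t+1) - W t| ≤ α / Real.sqrt (1-β₂))
    (t : ℕ) (ht : 1 ≤ t) (hball : |W t + δ^2| ≤ 1) :
    ∀ u, u ≤ t - 1 →
      (Real.sqrt β₂)^(t-1-u) * V u ≤ (1-β₂) * S / (1 - Real.sqrt β₂) := by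
  have hK : (0:ℝ) < 1 - β₂ := by linarith
  set C := α / Real.sqrt (1-β₂) with hCdef
  set r := Real.sqrt β₂ with hrdef
  have hr0 : 0 ≤ r := Real.sqrt_nonneg _
  have hr1 : r < 1 := by
    rw [hrdef, show (1:ℝ) = Real.sqrt 1 by simp]
    exact Real.sqrt_lt_sqrt hβ₂0 hβ₂1
  have hβr : r^2 = β₂ := Real.sq_sqrt hβ₂0
  have hS0 : 0 ≤ S := le_trans (by positivity) (hS 0)
  have hRHS0 : 0 ≤ (1-β₂) * S / (1 - r) := by
    apply div_nonneg (mul_nonneg hK.le hS0) (by linarith)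
  have hWt : |W t| ≤ δ^2 + 1 := by
    have : |W t| = |(W t + δ^2) - δ^2| := by ring_nf
    rw [this]
    calc |(W t + δ^2) - δ^2| ≤ |W t + δ^2| + |δ^2| := abs_sub _ _
      _ ≤ δ^2 + 1 := by rw [abs_of_nonneg (sq_nonneg δ)]; linarith
  intro u
  induction u with
  | zero =>
    intro _
    rw [hV0, mul_zero]
    exact hRHS0
  | succ u ih =>
    intro hu
    have hu' : u ≤ t - 1 := by omega
    have IH := ih hu'
    set j := t - 1 - (u+1) with hjdef
    have hj1 : t - 1 - u = j + 1 := by omega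
    rw [hj1] at IH
    rw [hVrec (u+1) (by omega)]
    simp only [Nat.add_sub_cancel]
    set g := OPgrad δ (W (u+1)) (X (u+1)) with hgdef
    -- bound on |W (u+1)|
    have hWu : |W (u+1)| ≤ δ^2 + 1 + C * ((j:ℝ)+1) := by
      have h1 := step_abs_le' (α := α) (β₂ := β₂) (W := W) hC (t - (u+1)) (u+1) (by omega)
      have h2 : (u+1) + (t - (u+1)) = t := by omega
      have h3 : t - (u+1) = j + 1 := by omega
      rw [h2, h3] at h1
      push_cast at h1
      rw [← hCdef] at h1
      linarith
    have hgB : |g| ≤ (δ^2+1+C*((j:ℝ)+1))/δ + δ^4 := by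
      have h1 := OPgrad_abs_le hδ1 (W (u+1)) (X (u+1))
      rw [← hgdef] at h1
      have h2 : |W (u+1)| / δ ≤ (δ^2+1+C*((j:ℝ)+1))/δ := by
        gcongr
      linarith
    have hg2 : g^2 * r^j ≤ S := by
      calc g^2 * r^j = |g|^2 * r^j := by rw [sq_abs]
        _ ≤ ((δ^2+1+C*((j:ℝ)+1))/δ + δ^4)^2 * r^j := by
            gcongr
        _ ≤ S := hS j
    calc r^j * (β₂ * V u + (1-β₂) * g^2)
        = r * (r^(j+1) * V u) + (1-β₂) * (g^2 * r^j) := by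
          rw [← hβr]; ring
      _ ≤ r * ((1-β₂) * S / (1 - r)) + (1-β₂) * S := by
          apply add_le_add
          · exact mul_le_mul_of_nonneg_left IH hr0
          · exact mul_le_mul_of_nonneg_left hg2 hK.le
      _ = (1-β₂) * S / (1 - r) := by
          have hr1' : (1:ℝ) - r ≠ 0 := by linarith
          field_simp
          ring

lemma window (hα : 0 < α) (hβ₂0 : 0 ≤ β₂) (hβ₂1 : β₂ < 1)
    (hδ : α / Real.sqrt (1-β₂) + 3 < δ)
    {S : ℝ}
    (hS : ∀ j : ℕ, ((δ^2+1+(α / Real.sqrt (1-β₂))*((j:ℝ)+1))/δ + δ^4)^2 * (Real.sqrt β₂)^j ≤ S)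
    (hV0 : V 0 = 0)
    (hVrec : ∀ t, 1 ≤ t → V t = β₂ * V (t-1) + (1-β₂) * (OPgrad δ (W t) (X t))^2)
    (hWrec : ∀ t, 1 ≤ t → W (t+1) = W t - α * OPgrad δ (W t) (X t) / Real.sqrt (V t))
    (t k : ℕ) (ht : 2 ≤ t)
    (hk3 : 3 ≤ (k:ℝ) *
      (α / Real.sqrt (max ((1-β₂) * S / (1 - Real.sqrt β₂)) ((δ+2)^2))))
    (hball : |W t + δ^2| ≤ 1) (hfalse : ∀ m, m < k → X (t+m) = false) :
    2 ≤ W (t+k) + δ^2 := by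
  have hK : (0:ℝ) < 1 - β₂ := by linarith
  set C := α / Real.sqrt (1-β₂) with hCdef
  have hC0 : 0 ≤ C := by positivity
  have hδ3 : 3 < δ := by linarith
  have hδ0 : (0:ℝ) < δ := by linarith
  have hδ1 : (1:ℝ) ≤ δ := by linarith
  set r := Real.sqrt β₂ with hrdef
  set Vm := max ((1-β₂) * S / (1 - r)) ((δ+2)^2) with hVmdef
  set σ := α / Real.sqrt Vm with hσdef
  have hVmpos : 0 < Vm := lt_of_lt_of_le (by positivity) (le_max_right _ _)
  have hσpos : 0 < σ := div_pos hα (Real.sqrt_pos.mpr hVmpos)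
  have hCb := step_abs_le_main hα hβ₂0 hβ₂1 hV0 hVrec hWrec
  have hVnn := V_nonneg hβ₂0 hβ₂1 hV0 hVrec
  have hVge := V_ge hβ₂0 hβ₂1 hV0 hVrec
  have hVtm1 : V (t-1) ≤ Vm := by
    have h1 := V_bound hα hβ₂0 hβ₂1 hδ1 hS hV0 hVrec hCb t (by omega) hball (t-1) le_rfl
    rw [Nat.sub_self, pow_zero, one_mul] at h1
    exact le_trans h1 (le_max_left _ _)
  have main : ∀ m, m ≤ k →
      ((-δ^2-1 ≤ W (t+m) ∧ W (t+m) ≤ δ + C) ∧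
        min (-δ^2-1 + (m:ℝ)*σ) 0 ≤ W (t+m)) ∧ V (t+m-1) ≤ Vm := by
    intro m
    induction m with
    | zero =>
      intro _
      have hb := abs_le.mp hball
      simp only [Nat.add_zero]
      refine ⟨⟨⟨by linarith [hb.1], by nlinarith [hb.2]⟩, ?_⟩, hVtm1⟩
      calc min (-δ^2-1 + ((0:ℕ):ℝ)*σ) 0 ≤ -δ^2-1 + ((0:ℕ):ℝ)*σ := min_le_left _ _
        _ ≤ W t := by push_cast; linarith [hb.1]
    | succ m ih =>
      intro hm1
      obtain ⟨⟨⟨ha1, ha2⟩, hc⟩, hd⟩ := ih (by omega)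
      have hfm : X (t+m) = false := hfalse m (by omega)
      have hgval : OPgrad δ (W (t+m)) (X (t+m)) = W (t+m) / δ - 1 := by
        rw [hfm]; simp [OPgrad]
      have hWabs : |W (t+m)| ≤ δ^2 + 1 := by
        rw [abs_le]
        constructor
        · linarith
        · nlinarith
      have hgabs : |W (t+m)/δ - 1| ≤ δ + 2 := by
        have h1 : |W (t+m)/δ - 1| ≤ |W (t+m)/δ| + 1 := by
          calc |W (t+m)/δ - 1| ≤ |W (t+m)/δ| + |(1:ℝ)| := abs_sub _ _
            _ = |W (t+m)/δ| + 1 := by simp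
        have h2 : |W (t+m)/δ| = |W (t+m)|/δ := by rw [abs_div, abs_of_pos hδ0]
        have h3 : |W (t+m)|/δ ≤ (δ^2+1)/δ := by gcongr
        have h4 : (δ^2+1)/δ ≤ δ + 1 := by rw [div_le_iff₀ hδ0]; nlinarith
        rw [h2] at h1
        linarith
      have hVs_le : V (t+m) ≤ Vm := by
        rw [hVrec (t+m) (by omega), hgval]
        have hd' : V (t+m-1) ≤ Vm := hd
        have hg2 : (W (t+m)/δ - 1)^2 ≤ (δ+2)^2 := by
          rw [← sq_abs]
          apply pow_le_pow_left₀ (abs_nonneg _) hgabs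
        have hVm2 : (δ+2)^2 ≤ Vm := le_max_right _ _
        nlinarith
      have hstep_eq : W (t+m+1) = W (t+m) - α * (W (t+m)/δ - 1) / Real.sqrt (V (t+m)) := by
        rw [hWrec (t+m) (by omega), hgval]
      have hstep_abs : |W (t+m+1) - W (t+m)| ≤ C := hCb (t+m) (by omega)
      have hstep_abs' := abs_le.mp hstep_abs
      have hta : t + (m+1) = (t+m) + 1 := by omega
      rw [hta]
      have htb : t + (m+1) - 1 = t + m := by omega
      by_cases hWsδ : W (t+m) ≤ δ
      · -- step is nonnegative
        have hstep_nn : 0 ≤ W (t+m+1) - W (t+m) := by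
          have he : W (t+m+1) - W (t+m) = α * (1 - W (t+m)/δ) / Real.sqrt (V (t+m)) := by
            rw [hstep_eq]; ring
          rw [he]
          have h1 : W (t+m)/δ ≤ 1 := by rw [div_le_one hδ0]; linarith
          exact div_nonneg (mul_nonneg hα.le (by linarith)) (Real.sqrt_nonneg _)
        refine ⟨⟨⟨by linarith, by linarith [hstep_abs'.2]⟩, ?_⟩, by simp only [Nat.add_sub_cancel]; exact hVs_le⟩
        by_cases hneg : W (t+m) < 0
        · -- lower bound improves by σ
          have hA : -δ^2-1 + (m:ℝ)*σ ≤ W (t+m) := by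
            rcases min_cases (-δ^2-1 + (m:ℝ)*σ) 0 with ⟨heq, _⟩ | ⟨heq, _⟩
            · rwa [heq] at hc
            · rw [heq] at hc; linarith
          have hgle : W (t+m)/δ - 1 ≤ -1 := by
            have : W (t+m)/δ < 0 := div_neg_of_neg_of_pos hneg hδ0
            linarith
          have hVpos : 0 < V (t+m) := by
            have h1 := hVge (t+m) (by omega)
            rw [hgval] at h1
            have h2 : 1 ≤ (W (t+m)/δ - 1)^2 := by nlinarith [sq_nonneg (W (t+m)/δ - 1 + 1)]
            nlinarith
          have hstep_ge : σ ≤ W (t+m+1) - W (t+m) := by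
            have he : W (t+m+1) - W (t+m) = α * (1 - W (t+m)/δ) / Real.sqrt (V (t+m)) := by
              rw [hstep_eq]; ring
            rw [he]
            have h2 : Real.sqrt (V (t+m)) ≤ Real.sqrt Vm := Real.sqrt_le_sqrt hVs_le
            have h3 : 0 < Real.sqrt (V (t+m)) := Real.sqrt_pos.mpr hVpos
            have h4 : (1:ℝ) ≤ 1 - W (t+m)/δ := by linarith
            calc σ = α / Real.sqrt Vm := hσdef
              _ ≤ α / Real.sqrt (V (t+m)) := by
                  apply div_le_div_of_nonneg_left hα.le h3 h2
              _ ≤ α * (1 - W (t+m)/δ) / Real.sqrt (V (t+m)) := by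
                  gcongr
                  nlinarith
          calc min (-δ^2-1 + ((m+1:ℕ):ℝ)*σ) 0 ≤ -δ^2-1 + ((m+1:ℕ):ℝ)*σ := min_le_left _ _
            _ = (-δ^2-1 + (m:ℝ)*σ) + σ := by push_cast; ring
            _ ≤ W (t+m) + (W (t+m+1) - W (t+m)) := by linarith
            _ = W (t+m+1) := by ring
        · push_neg at hneg
          calc min (-δ^2-1 + ((m+1:ℕ):ℝ)*σ) 0 ≤ 0 := min_le_right _ _
            _ ≤ W (t+m+1) := by linarith
      · push_neg at hWsδ
        have hstep_np : W (t+m+1) - W (t+m) ≤ 0 := by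
          have he : W (t+m+1) - W (t+m) = α * (1 - W (t+m)/δ) / Real.sqrt (V (t+m)) := by
            rw [hstep_eq]; ring
          rw [he]
          have h1 : (1:ℝ) < W (t+m)/δ := by rw [lt_div_iff₀ hδ0]; nlinarith
          apply div_nonpos_of_nonpos_of_nonneg
          · nlinarith
          · exact Real.sqrt_nonneg _
        have hClt : C < δ - 3 := by linarith
        refine ⟨⟨⟨by nlinarith [hstep_abs'.1], by linarith⟩, ?_⟩, by simp only [Nat.add_sub_cancel]; exact hVs_le⟩
        calc min (-δ^2-1 + ((m+1:ℕ):ℝ)*σ) 0 ≤ 0 := min_le_right _ _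
          _ ≤ W (t+m+1) := by nlinarith [hstep_abs'.1]
  obtain ⟨⟨_, _⟩, hck⟩ := (main k le_rfl).1
  rcases min_cases (-δ^2-1 + (k:ℝ)*σ) 0 with ⟨heq, _⟩ | ⟨heq, _⟩
  · rw [heq] at hck; linarith
  · rw [heq] at hck; nlinarith

end Deterministic

section Prob

variable {Ω : Type} {α β₂ δ : ℝ} {ξ : ℕ → Ω → Bool} {w v : ℕ → Ω → ℝ} {w₁ : ℝ}

/-- Joint measurability of the ADAM iterates with respect to any σ-algebra for which the
relevant samples are measurable. -/
lemma meas_wv (m₀ : MeasurableSpace Ω) (T : ℕ)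
    (hξm : ∀ s, 1 ≤ s → s ≤ T → Measurable[m₀] (ξ s))
    (hw1 : ∀ ω, w 1 ω = w₁) (hv0 : ∀ ω, v 0 ω = 0)
    (hvrec : ∀ t : ℕ, 1 ≤ t → ∀ ω,
      v t ω = β₂ * v (t - 1) ω + (1 - β₂) * (OPgrad δ (w t ω) (ξ t ω)) ^ 2)
    (hwrec : ∀ t : ℕ, 1 ≤ t → ∀ ω,
      w (t + 1) ω = w t ω - α * OPgrad δ (w t ω) (ξ t ω) / Real.sqrt (v t ω)) :
    ∀ u, u ≤ T → Measurable[m₀] (v u) ∧ Measurable[m₀] (w (u+1)) := by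
  intro u
  induction u with
  | zero =>
    intro _
    constructor
    · have : v 0 = fun _ => (0:ℝ) := funext hv0
      rw [this]; exact measurable_const
    · have : w 1 = fun _ => w₁ := funext hw1
      rw [this]; exact measurable_const
  | succ u ih =>
    intro hu
    obtain ⟨hv', hw'⟩ := ih (by omega)
    have hξ : Measurable[m₀] (ξ (u+1)) := hξm (u+1) (by omega) hu
    have hg : Measurable[m₀] (fun ω => OPgrad δ (w (u+1) ω) (ξ (u+1) ω)) := by
      have he : (fun ω => OPgrad δ (w (u+1) ω) (ξ (u+1) ω)) =
          fun ω => if ξ (u+1) ω = true then w (u+1) ω / δ + δ^4 else w (u+1) ω / δ - 1 := by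
        funext ω; simp [OPgrad]
      rw [he]
      apply Measurable.ite
      · exact hξ (measurableSet_singleton true)
      · exact (hw'.div_const δ).add measurable_const
      · exact (hw'.div_const δ).sub measurable_const
    have hvnew : Measurable[m₀] (v (u+1)) := by
      have he : v (u+1) =
          fun ω => β₂ * v u ω + (1 - β₂) * (OPgrad δ (w (u+1) ω) (ξ (u+1) ω))^2 := by
        funext ω
        have := hvrec (u+1) (by omega) ω
        simpa using this
      rw [he]
      exact (measurable_const.mul hv').add
        (measurable_const.mul (hg.pow_const 2))
    refine ⟨hvnew, ?_⟩
    have he : w (u+1+1) =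
        fun ω => w (u+1) ω - α * OPgrad δ (w (u+1) ω) (ξ (u+1) ω) / Real.sqrt (v (u+1) ω) := by
      funext ω; exact hwrec (u+1) (by omega) ω
    rw [he]
    exact hw'.sub ((measurable_const.mul hg).div
      (Real.continuous_sqrt.measurable.comp hvnew))

end Prob

/-- Divergenceof ADAM on OP(δ): for any step size `α > 0` and `β₂ ∈ [0,1)` there is a
threshold `δ* > 2` such that for every `δ > δ*` and every initial point `w₁`, the ADAM
iterates on OP(δ) (with i.i.d. samples `ξ_t`, `P(ξ_t = 1) = (1+δ)/(1+δ⁴)`,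
`v_t = β₂ v_{t-1} + (1-β₂) g_t²`, `w_{t+1} = w_t - α g_t/√v_t`) fail to converge in
expectation to the optimal value `F* = F(-δ²)`. -/
theorem adam_diverges_on_OP (α β₂ : ℝ) (hα : 0 < α) (hβ₂0 : 0 ≤ β₂) (hβ₂1 : β₂ < 1) :
    ∃ δstar : ℝ, 2 < δstar ∧
      ∀ δ : ℝ, δstar < δ →
      ∀ (Ω : Type) (_mΩ : MeasurableSpace Ω) (μ : Measure Ω), IsProbabilityMeasure μ →
      ∀ ξ : ℕ → Ω → Bool,
        (∀ t, Measurable (ξ t)) →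
        ProbabilityTheory.iIndepFun ξ μ →
        (∀ t, μ {ω | ξ t ω = true} = ENNReal.ofReal ((1 + δ) / (1 + δ ^ 4))) →
      ∀ (w v : ℕ → Ω → ℝ) (w₁ : ℝ),
        (∀ ω, w 1 ω = w₁) →
        (∀ ω, v 0 ω = 0) →
        (∀ t : ℕ, 1 ≤ t → ∀ ω,
          v t ω = β₂ * v (t - 1) ω + (1 - β₂) * (OPgrad δ (w t ω) (ξ t ω)) ^ 2) →
        (∀ t : ℕ, 1 ≤ t → ∀ ω,
          w (t + 1) ω = w t ω - α * OPgrad δ (w t ω) (ξ t ω) / Real.sqrt (v t ω)) →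
        ¬ Tendsto (fun t => ∫ ω, OPloss δ (w t ω) ∂μ) atTop (nhds (OPloss δ (-δ ^ 2))) := by
  classical
  have hK : (0:ℝ) < 1 - β₂ := by linarith
  set C := α / Real.sqrt (1 - β₂) with hCdef
  have hC0 : 0 ≤ C := by positivity
  refine ⟨C + 3, by linarith, ?_⟩
  intro δ hδ Ω mΩ μ hprob ξ hξm hξind hξp w v w₁ hw1 hv0 hvrec hwrec h
  haveI := hprob
  have hδ3 : (3:ℝ) < δ := by linarith
  have hδ0 : (0:ℝ) < δ := by linarith
  have hδ1 : (1:ℝ) ≤ δ := by linarith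
  set r := Real.sqrt β₂ with hrdef
  have hr0 : 0 ≤ r := Real.sqrt_nonneg _
  have hr1 : r < 1 := by
    rw [hrdef, show (1:ℝ) = Real.sqrt 1 by simp]
    exact Real.sqrt_lt_sqrt hβ₂0 hβ₂1
  -- bounding constant for the second-moment sequence
  set E : ℕ → ℝ := fun j => ((δ^2+1+C*((j:ℝ)+1))/δ + δ^4)^2 * r^j with hEdef
  have hEt : Tendsto E atTop (nhds 0) := by
    have hEeq : E = fun j : ℕ =>
        ((δ^2+1+C)/δ + δ^4)^2 * r^j +
          ((2*((δ^2+1+C)/δ + δ^4)*(C/δ)) * ((j:ℝ)^1 * r^j) +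
            (C/δ)^2 * ((j:ℝ)^2 * r^j)) := by
      funext j
      rw [hEdef]
      have hδne : δ ≠ 0 := ne_of_gt hδ0
      field_simp
      ring
    rw [hEeq]
    have l0 : Tendsto (fun j : ℕ => r^j) atTop (nhds 0) :=
      tendsto_pow_atTop_nhds_zero_of_lt_one hr0 hr1
    have l1 := tendsto_pow_const_mul_const_pow_of_lt_one 1 hr0 hr1
    have l2 := tendsto_pow_const_mul_const_pow_of_lt_one 2 hr0 hr1
    have := (l0.const_mul (((δ^2+1+C)/δ + δ^4)^2)).add
      ((l1.const_mul (2*((δ^2+1+C)/δ + δ^4)*(C/δ))).add (l2.const_mul ((C/δ)^2)))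
    simpa using this
  set S := sSup (Set.range E) with hSdef
  have hS : ∀ j, E j ≤ S := fun j => le_csSup hEt.bddAbove_range ⟨j, rfl⟩
  set Vm := max ((1 - β₂) * S / (1 - r)) ((δ+2)^2) with hVmdef
  have hVmpos : 0 < Vm := lt_of_lt_of_le (by positivity) (le_max_right _ _)
  set σ := α / Real.sqrt Vm with hσdef
  have hσpos : 0 < σ := div_pos hα (Real.sqrt_pos.mpr hVmpos)
  set k := Nat.ceil (3/σ) with hkdef
  have hk3 : 3 ≤ (k:ℝ) * σ := by
    have h1 := Nat.le_ceil (3/σ)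
    calc (3:ℝ) = (3/σ) * σ := by field_simp
      _ ≤ (k:ℝ) * σ := by
          apply mul_le_mul_of_nonneg_right _ hσpos.le
          exact_mod_cast h1
  have hk1 : 1 ≤ k := by
    have : (0:ℝ) < 3/σ := by positivity
    have := Nat.ceil_pos.mpr this
    omega
  set p := (1+δ)/(1+δ^4) with hpdef
  have hp0 : 0 ≤ p := by positivity
  have hp1 : p < 1 := by
    rw [hpdef, div_lt_one (by positivity)]
    nlinarith [mul_pos (mul_pos hδ0 (show (0:ℝ) < δ - 1 by linarith))
      (show (0:ℝ) < δ^2+δ+1 by positivity)]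
  set q := 1 - p with hqdef
  have hq0 : 0 < q := by linarith
  have hξfalse : ∀ s, μ ((ξ s) ⁻¹' {false}) = ENNReal.ofReal q := by
    intro s
    have h1 : (ξ s) ⁻¹' {false} = {ω | ξ s ω = true}ᶜ := by
      ext ω; simp
    have hms : MeasurableSet {ω | ξ s ω = true} :=
      hξm s (measurableSet_singleton true)
    rw [h1, measure_compl hms (measure_ne_top μ _), hξp s, measure_univ, hqdef, hpdef,
      ENNReal.ofReal_sub 1 hp0, ENNReal.ofReal_one]
  -- measurability, boundedness, integrability
  have hwmeas : ∀ t : ℕ, 1 ≤ t → Measurable (w t) := by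
    intro t ht
    have := (meas_wv mΩ t (fun s _ _ => hξm s) hw1 hv0 hvrec hwrec (t-1) (by omega)).2
    rwa [show t - 1 + 1 = t by omega] at this
  have hstepC : ∀ ω, ∀ t, 1 ≤ t → |w (t+1) ω - w t ω| ≤ C := by
    intro ω
    exact step_abs_le_main (W := fun n => w n ω) (V := fun n => v n ω) (X := fun n => ξ n ω)
      hα hβ₂0 hβ₂1 (hv0 ω) (fun t' ht' => hvrec t' ht' ω) (fun t' ht' => hwrec t' ht' ω)
  have hbnd : ∀ t : ℕ, 1 ≤ t → ∀ ω, |w t ω| ≤ |w₁| + C * t := by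
    have key : ∀ d : ℕ, ∀ ω, |w (1+d) ω| ≤ |w₁| + C * d := by
      intro d
      induction d with
      | zero => intro ω; simp [hw1 ω]
      | succ d ih =>
        intro ω
        have h1 := hstepC ω (1+d) (by omega)
        have h2 := ih ω
        have h3 : |w (1+d+1) ω| - |w (1+d) ω| ≤ |w (1+d+1) ω - w (1+d) ω| :=
          abs_sub_abs_le_abs_sub _ _
        have h4 : 1 + (d+1) = (1+d) + 1 := by omega
        rw [h4]
        push_cast
        push_cast at h2
        linarith
    intro t ht ω
    have h1 := key (t-1) ω
    rw [show 1 + (t-1) = t by omega] at h1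
    have h2 : ((t:ℝ) - 1) ≤ (t:ℝ) := by linarith
    have h3 : ((t-1 : ℕ) : ℝ) = (t:ℝ) - 1 := by
      have : (1:ℕ) ≤ t := ht
      push_cast [Nat.cast_sub this]
      ring
    rw [h3] at h1
    nlinarith
  have hInt : ∀ t : ℕ, 1 ≤ t → Integrable (fun ω => (w t ω + δ^2)^2) μ := by
    intro t ht
    have hm : Measurable fun ω => (w t ω + δ^2)^2 :=
      ((hwmeas t ht).add_const (δ^2)).pow_const 2
    apply (integrable_const ((|w₁| + C*t + δ^2)^2)).mono' hm.aestronglyMeasurable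
    apply ae_of_all
    intro ω
    have h5 : |w t ω + δ^2| ≤ |w₁| + C*t + δ^2 := by
      calc |w t ω + δ^2| ≤ |w t ω| + |δ^2| := abs_add_le _ _
        _ ≤ |w₁| + C*t + δ^2 := by
            rw [abs_of_nonneg (sq_nonneg δ)]
            linarith [hbnd t ht ω]
    rw [Real.norm_eq_abs, abs_of_nonneg (sq_nonneg _), ← sq_abs (w t ω + δ^2)]
    apply pow_le_pow_left₀ (abs_nonneg _) h5
  have hIntL : ∀ t : ℕ, 1 ≤ t → Integrable (fun ω => OPloss δ (w t ω)) μ := by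
    intro t ht
    have hm : Measurable fun ω => OPloss δ (w t ω) := by
      have he : (fun ω => OPloss δ (w t ω)) =
          fun ω => (w t ω)^2 / (2*δ) + δ * w t ω := by
        funext ω; simp [OPloss]
      rw [he]
      exact (((hwmeas t ht).pow_const 2).div_const _).add (measurable_const.mul (hwmeas t ht))
    apply (integrable_const ((|w₁| + C*t)^2/(2*δ) + δ*(|w₁| + C*t))).mono' hm.aestronglyMeasurable
    apply ae_of_all
    intro ω
    have hb := hbnd t ht ω
    have hb0 : 0 ≤ |w t ω| := abs_nonneg _
    rw [Real.norm_eq_abs]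
    have h6 : |OPloss δ (w t ω)| ≤ (w t ω)^2/(2*δ) + δ * |w t ω| := by
      simp only [OPloss]
      calc |(w t ω)^2/(2*δ) + δ * w t ω| ≤ |(w t ω)^2/(2*δ)| + |δ * w t ω| := abs_add_le _ _
        _ = (w t ω)^2/(2*δ) + δ * |w t ω| := by
            rw [abs_div, abs_of_nonneg (sq_nonneg _), abs_of_pos (by linarith : (0:ℝ) < 2*δ),
              abs_mul, abs_of_pos hδ0]
    have h7 : (w t ω)^2 ≤ (|w₁| + C*t)^2 := by
      rw [← sq_abs]
      apply pow_le_pow_left₀ hb0 hb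
    have h8 : (w t ω)^2/(2*δ) ≤ (|w₁| + C*t)^2/(2*δ) := by gcongr
    have h9 : δ * |w t ω| ≤ δ * (|w₁| + C*t) := by nlinarith
    linarith
  -- identity between the loss gap and the squared distance
  have hident : ∀ t : ℕ, 1 ≤ t →
      ∫ ω, (w t ω + δ^2)^2 ∂μ
        = 2*δ*((∫ ω, OPloss δ (w t ω) ∂μ) - OPloss δ (-δ^2)) := by
    intro t ht
    have hpt : ∀ x : ℝ, (x + δ^2)^2 = 2*δ*(OPloss δ x - OPloss δ (-δ^2)) := by
      intro x
      simp only [OPloss]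
      field_simp
      ring
    calc ∫ ω, (w t ω + δ^2)^2 ∂μ
        = ∫ ω, 2*δ*(OPloss δ (w t ω) - OPloss δ (-δ^2)) ∂μ := by
          congr 1; funext ω; rw [hpt]
      _ = 2*δ * ∫ ω, (OPloss δ (w t ω) - OPloss δ (-δ^2)) ∂μ := integral_const_mul _ _
      _ = 2*δ*((∫ ω, OPloss δ (w t ω) ∂μ) - OPloss δ (-δ^2)) := by
          rw [integral_sub (hIntL t ht) (integrable_const _), integral_const]
          simp
  have hE2 : Tendsto (fun t => ∫ ω, (w t ω + δ^2)^2 ∂μ) atTop (nhds 0) := by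
    have h2 := (h.sub_const (OPloss δ (-δ^2))).const_mul (2*δ)
    rw [sub_self, mul_zero] at h2
    apply Tendsto.congr' _ h2
    filter_upwards [eventually_ge_atTop 1] with t ht
    have := hident t ht
    rw [this]
  -- the good event
  set A : ℕ → Set Ω := fun t => {ω | |w t ω + δ^2| ≤ 1} with hAdef
  have hAmeas : ∀ t : ℕ, 1 ≤ t → MeasurableSet (A t) := by
    intro t ht
    have : A t = (fun ω => |w t ω + δ^2|) ⁻¹' (Set.Iic 1) := rfl
    rw [this]
    exact ((hwmeas t ht).add_const _).abs measurableSet_Iic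
  have hMark : ∀ t : ℕ, 1 ≤ t → (μ ((A t)ᶜ)).toReal ≤ ∫ ω, (w t ω + δ^2)^2 ∂μ := by
    intro t ht
    have hmc := (hAmeas t ht).compl
    have h1 : (μ ((A t)ᶜ)).toReal = ∫ ω, ((A t)ᶜ).indicator (fun _ => (1:ℝ)) ω ∂μ := by
      rw [integral_indicator_const _ hmc]; simp; rfl
    rw [h1]
    apply integral_mono ((integrable_const (1:ℝ)).indicator hmc) (hInt t ht)
    intro ω
    by_cases hω : ω ∈ (A t)ᶜ
    · rw [Set.indicator_of_mem hω]
      have h2 : ¬ |w t ω + δ^2| ≤ 1 := hω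
      push_neg at h2
      show (1:ℝ) ≤ (w t ω + δ^2)^2
      rw [← sq_abs (w t ω + δ^2)]
      nlinarith [abs_nonneg (w t ω + δ^2)]
    · rw [Set.indicator_of_notMem hω]
      show (0:ℝ) ≤ (w t ω + δ^2)^2
      positivity
  -- the key lower bound
  have hmain : ∀ t : ℕ, 2 ≤ t → (μ ((A t)ᶜ)).toReal < 1/2 →
      2*q^k ≤ ∫ ω, (w (t+k) ω + δ^2)^2 ∂μ := by
    intro t ht hsmall
    set S₁ := Finset.Icc 1 (t-1) with hS1
    set S₂ := Finset.Icc t (t+k-1) with hS2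
    have hdisj : Disjoint S₁ S₂ := by
      rw [Finset.disjoint_left]
      intro x hx1 hx2
      rw [hS1, Finset.mem_Icc] at hx1
      rw [hS2, Finset.mem_Icc] at hx2
      omega
    have hIndep := hξind.indepFun_finset S₁ S₂ hdisj hξm
    set g₁ : Ω → (S₁ → Bool) := fun ω i => ξ i ω with hg₁
    set g₂ : Ω → (S₂ → Bool) := fun ω i => ξ i ω with hg₂
    have hg₁meas : Measurable[MeasurableSpace.comap g₁ MeasurableSpace.pi] g₁ :=
      Measurable.of_comap_le le_rfl
    have hξ𝒢 : ∀ s, 1 ≤ s → s ≤ t-1 →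
        Measurable[MeasurableSpace.comap g₁ MeasurableSpace.pi] (ξ s) := by
      intro s hs1 hs2
      have hmem : s ∈ S₁ := by rw [hS1, Finset.mem_Icc]; omega
      exact (measurable_pi_apply (⟨s, hmem⟩ : S₁)).comp hg₁meas
    have hw𝒢 : Measurable[MeasurableSpace.comap g₁ MeasurableSpace.pi] (w t) := by
      have := (meas_wv (MeasurableSpace.comap g₁ MeasurableSpace.pi) (t-1)
        hξ𝒢 hw1 hv0 hvrec hwrec (t-1) le_rfl).2
      rwa [show t-1+1 = t by omega] at this
    have hA𝒢 : MeasurableSet[MeasurableSpace.comap g₁ MeasurableSpace.pi] (A t) := by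
      have hAe : A t = (w t) ⁻¹' {x : ℝ | |x + δ^2| ≤ 1} := rfl
      have hsR : MeasurableSet {x : ℝ | |x + δ^2| ≤ 1} := by
        have he2 : {x : ℝ | |x + δ^2| ≤ 1} = (fun x : ℝ => |x + δ^2|) ⁻¹' Set.Iic 1 := rfl
        rw [he2]
        exact ((measurable_id.add_const _).abs) measurableSet_Iic
      rw [hAe]
      exact hw𝒢 hsR
    obtain ⟨M, hM, hMeq⟩ := MeasurableSpace.measurableSet_comap.mp hA𝒢
    set N : Set (S₂ → Bool) := {x | ∀ i, x i = false} with hN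
    have hNmeas : MeasurableSet N := by
      have hNe : N = ⋂ i, (fun x : S₂ → Bool => x i) ⁻¹' {false} := by
        ext x; simp [hN]
      rw [hNe]
      exact MeasurableSet.iInter (fun i => measurable_pi_apply i (measurableSet_singleton false))
    set B := g₂ ⁻¹' N with hB
    have hBmem : ∀ ω ∈ B, ∀ m, m < k → ξ (t+m) ω = false := by
      intro ω hω m hm
      have hmem : t+m ∈ S₂ := by rw [hS2, Finset.mem_Icc]; omega
      exact hω ⟨t+m, hmem⟩
    have hg₂m : Measurable g₂ := measurable_pi_lambda g₂ (fun i => hξm i)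
    have hBmeas : MeasurableSet B := hg₂m hNmeas
    have hABμ : μ (A t ∩ B) = μ (A t) * μ B := by
      rw [← hMeq, hB]
      exact hIndep.measure_inter_preimage_eq_mul M N hM hNmeas
    have hBμ : μ B = ENNReal.ofReal q ^ k := by
      have hBeq : B = ⋂ i ∈ S₂, (ξ i) ⁻¹' {false} := by
        ext ω
        simp only [hB, hN, Set.mem_preimage, Set.mem_setOf_eq, Set.mem_iInter,
          Set.mem_singleton_iff]
        constructor
        · intro h' i hi; exact h' ⟨i, hi⟩
        · intro h' i; exact h' i.1 i.2
      rw [hBeq,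
        hξind.meas_biInter (fun i _ => ⟨{false}, measurableSet_singleton false, rfl⟩)]
      rw [Finset.prod_congr rfl (fun i _ => hξfalse i), Finset.prod_const]
      congr 1
      rw [hS2, Nat.card_Icc]
      omega
    have hq' : (μ B).toReal = q^k := by
      rw [hBμ, ENNReal.toReal_pow, ENNReal.toReal_ofReal hq0.le]
    have hAto : 1/2 ≤ (μ (A t)).toReal := by
      have hcompl : μ ((A t)ᶜ) = 1 - μ (A t) :=
        prob_compl_eq_one_sub (hAmeas t (by omega))
      have hle1 : μ (A t) ≤ 1 := prob_le_one
      have h2 : (μ ((A t)ᶜ)).toReal = 1 - (μ (A t)).toReal := by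
        rw [hcompl, ENNReal.toReal_sub_of_le hle1 ENNReal.one_ne_top, ENNReal.toReal_one]
      rw [h2] at hsmall
      have := ENNReal.toReal_nonneg (a := μ (A t))
      linarith
    have hABto : q^k/2 ≤ (μ (A t ∩ B)).toReal := by
      rw [hABμ, ENNReal.toReal_mul, hq']
      have hq2 : 0 ≤ q^k := by positivity
      nlinarith
    have hpw : ∀ ω ∈ A t ∩ B, 4 ≤ (w (t+k) ω + δ^2)^2 := by
      intro ω hω
      obtain ⟨hωA, hωB⟩ := hω
      have h2 : 2 ≤ w (t+k) ω + δ^2 := by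
        apply window (W := fun n => w n ω) (V := fun n => v n ω) (X := fun n => ξ n ω)
          hα hβ₂0 hβ₂1 (by rw [← hCdef]; exact hδ) hS (hv0 ω)
          (fun t' ht' => hvrec t' ht' ω) (fun t' ht' => hwrec t' ht' ω) t k ht hk3 hωA
          (hBmem ω hωB)
      nlinarith
    have hmAB : MeasurableSet (A t ∩ B) := (hAmeas t (by omega)).inter hBmeas
    have hconst : ∫ _ω in A t ∩ B, (4:ℝ) ∂μ = 4 * (μ (A t ∩ B)).toReal := by
      rw [setIntegral_const]
      simp [mul_comm]; rfl
    have hmono : ∫ ω in A t ∩ B, (4:ℝ) ∂μ ≤ ∫ ω in A t ∩ B, (w (t+k) ω + δ^2)^2 ∂μ :=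
      setIntegral_mono_on (integrable_const _).integrableOn
        (hInt (t+k) (by omega)).integrableOn hmAB hpw
    have hintAB : ∫ ω in A t ∩ B, (w (t+k) ω + δ^2)^2 ∂μ ≤ ∫ ω, (w (t+k) ω + δ^2)^2 ∂μ :=
      setIntegral_le_integral (hInt (t+k) (by omega))
        (ae_of_all _ (fun ω => sq_nonneg _))
    have hq2 : 0 ≤ q^k := by positivity
    calc 2*q^k = 4*(q^k/2) := by ring
      _ ≤ 4*(μ (A t ∩ B)).toReal := by linarith
      _ = ∫ _ω in A t ∩ B, (4:ℝ) ∂μ := hconst.symm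
      _ ≤ ∫ ω in A t ∩ B, (w (t+k) ω + δ^2)^2 ∂μ := hmono
      _ ≤ ∫ ω, (w (t+k) ω + δ^2)^2 ∂μ := hintAB
  -- conclusion
  have hev1 : ∀ᶠ t in atTop, (μ ((A t)ᶜ)).toReal < 1/2 := by
    have h1 : ∀ᶠ t in atTop, (∫ ω, (w t ω + δ^2)^2 ∂μ) < 1/2 :=
      hE2 (Iio_mem_nhds (by norm_num))
    filter_upwards [h1, eventually_ge_atTop 1] with t h2 h3
    exact lt_of_le_of_lt (hMark t h3) h2
  have hev2 : ∀ᶠ t in atTop, (∫ ω, (w t ω + δ^2)^2 ∂μ) < 2*q^k :=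
    hE2 (Iio_mem_nhds (by positivity))
  obtain ⟨T1, hT1⟩ := eventually_atTop.mp hev1
  obtain ⟨T2, hT2⟩ := eventually_atTop.mp hev2
  have hc1 := hmain (max (max T1 T2) 2) (le_max_right _ _)
    (hT1 _ (le_trans (le_max_left _ _) (le_max_left _ _)))
  have hc2 := hT2 (max (max T1 T2) 2 + k)
    (le_trans (le_trans (le_max_right _ _) (le_max_left _ _)) (Nat.le_add_right _ _))
  linarith
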